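/- FTRL regret identity: let Ψ_0*, …, Ψ_K* : ℝ^n → ℝ be differentiable convex functions, g_0, …, g_K ∈ ℝ^n, m_{-1} = 0, m_k = m_{k-1} + g_k, and x_{k+1} = −∇Ψ_k*(m_k) with x_0 = 0. Then for any fixed point u, Σ_{k=0}^{K} ⟨g_k, x_{k+1} − u⟩ = Ψ_0*(0) + ⟨−u, m_K⟩ − Ψ_K*(m_K) + Σ_{k=1}^{K} [Ψ_k*(m_{k-1}) − Ψ_{k-1}*(m_{k-1})] − Σ_{k=0}^{K} B_{Ψ_k*}(m_{k-1}; m_k), whenever ⟨−u, m_K⟩ is replaced by its supremum value used in the regret definition; in particular, with Reg_K^+ = max_{x : R(x) ≤ η} Σ_{k=0}^K ⟨g_k, x_{k+1} − x⟩ and dual norm R*(m) = max_{R(x) ≤ 1} ⟨m, x⟩, one has Reg_K^+ = Ψ_0*(0) + η R*(m_K) − Ψ_K*(m_K) + Σ_{k=1}^{K} [Ψ_k*(m_{k-1}) − Ψ_{k-1}*(m_{k-1})] − Σ_{k=0}^{K} B_{Ψ_k*}(m_{k-1}; m_k). -/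

import Mathlib

open Matrix
open scoped Classical

open scoped MatrixOrder in
/-- The positive semidefinite square root of a matrix (zero if not PSD). -/
noncomputable def sqrtM {n : ℕ} (A : Matrix (Fin n) (Fin n) ℝ) : Matrix (Fin n) (Fin n) ℝ :=
  if h : A.PosSemidef then CFC.sqrt A else 0

/-- Euclidean norm of a vector. -/
noncomputable def euclNorm {n : ℕ} (v : Fin n → ℝ) : ℝ := Real.sqrt (v ⬝ᵥ v)

/-- The ℓ₂ operator (spectral) norm of a matrix. -/
noncomputable def opNorm {n : ℕ} (A : Matrix (Fin n) (Fin n) ℝ) : ℝ :=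
  ⨆ u : {u : Fin n → ℝ // euclNorm u ≤ 1}, euclNorm (A *ᵥ u)

/-- A type synonym of `Fin n → ℝ` carrying the norm `R`. -/
def RSyn (n : ℕ) (_R : (Fin n → ℝ) → ℝ) : Type := Fin n → ℝ

lemma dot_bdd {n : ℕ} (m : Fin n → ℝ) (R : (Fin n → ℝ) → ℝ)
    (hR0 : ∀ x, R x = 0 ↔ x = 0) (hRs : ∀ (c : ℝ) x, R (c • x) = |c| * R x)
    (hRt : ∀ x y, R (x + y) ≤ R x + R y) :
    ∃ C : ℝ, ∀ u : Fin n → ℝ, R u ≤ 1 → m ⬝ᵥ u ≤ C := by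
  letI : AddCommGroup (RSyn n R) := inferInstanceAs (AddCommGroup (Fin n → ℝ))
  letI : Module ℝ (RSyn n R) := inferInstanceAs (Module ℝ (Fin n → ℝ))
  letI : NormedAddCommGroup (RSyn n R) := AddGroupNorm.toNormedAddCommGroup
    { toFun := R
      map_zero' := (hR0 0).mpr rfl
      add_le' := hRt
      neg' := fun x => by
        have := hRs (-1) x
        calc R (-x) = R ((-1 : ℝ) • x) := by rw [neg_one_smul]
          _ = |(-1 : ℝ)| * R x := this
          _ = R x := by simp
      eq_zero_of_map_eq_zero' := fun x h => (hR0 x).mp h }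
  letI : NormedSpace ℝ (RSyn n R) := { norm_smul_le := fun c x => le_of_eq (hRs c x) }
  letI : FiniteDimensional ℝ (RSyn n R) := inferInstanceAs (FiniteDimensional ℝ (Fin n → ℝ))
  let L : RSyn n R →ₗ[ℝ] EuclideanSpace ℝ (Fin n) :=
    { toFun := fun x => (WithLp.equiv 2 (Fin n → ℝ)).symm x
      map_add' := fun _ _ => rfl
      map_smul' := fun _ _ => rfl }
  let Lc := LinearMap.toContinuousLinearMap L
  refine ⟨‖(WithLp.equiv 2 (Fin n → ℝ)).symm m‖ * ‖Lc‖, fun u hu => ?_⟩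
  have h1 : m ⬝ᵥ u = inner ℝ ((WithLp.equiv 2 (Fin n → ℝ)).symm m) (Lc u) := by
    simp [PiLp.inner_apply, dotProduct, RCLike.inner_apply, Lc, L, mul_comm]
  have h2 : ‖Lc u‖ ≤ ‖Lc‖ * R u := Lc.le_opNorm (show RSyn n R from u)
  calc m ⬝ᵥ u ≤ ‖(WithLp.equiv 2 (Fin n → ℝ)).symm m‖ * ‖Lc u‖ := by
        rw [h1]; exact real_inner_le_norm _ _
    _ ≤ ‖(WithLp.equiv 2 (Fin n → ℝ)).symm m‖ * ‖Lc‖ := by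
        have h4 : ‖Lc u‖ ≤ ‖Lc‖ := h2.trans (by nlinarith [Lc.opNorm_nonneg])
        exact mul_le_mul_of_nonneg_left h4 (norm_nonneg _)

lemma sup_shift {n : ℕ} {η : ℝ} (hη : 0 < η) (C : ℝ) (m : Fin n → ℝ)
    (R : (Fin n → ℝ) → ℝ)
    (hR0 : ∀ x, R x = 0 ↔ x = 0) (hRs : ∀ (c : ℝ) x, R (c • x) = |c| * R x)
    (hbdd : BddAbove (Set.range fun u : {u : Fin n → ℝ // R u ≤ 1} => m ⬝ᵥ u.1)) :
    (⨆ u : {u : Fin n → ℝ // R u ≤ η}, (C - m ⬝ᵥ u.1))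
      = C + η * ⨆ u : {u : Fin n → ℝ // R u ≤ 1}, m ⬝ᵥ u.1 := by
  have hz : R 0 = 0 := (hR0 0).mpr rfl
  haveI ne1 : Nonempty {u : Fin n → ℝ // R u ≤ 1} := ⟨⟨0, by rw [hz]; norm_num⟩⟩
  haveI neη : Nonempty {u : Fin n → ℝ // R u ≤ η} := ⟨⟨0, by rw [hz]; exact hη.le⟩⟩
  set S := ⨆ u : {u : Fin n → ℝ // R u ≤ 1}, m ⬝ᵥ u.1 with hSdef
  have hS : IsLUB (Set.range fun u : {u : Fin n → ℝ // R u ≤ 1} => m ⬝ᵥ u.1) S :=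
    isLUB_ciSup hbdd
  have hlub : IsLUB (Set.range fun u : {u : Fin n → ℝ // R u ≤ η} => (C - m ⬝ᵥ u.1))
      (C + η * S) := by
    constructor
    · rintro x ⟨u, rfl⟩
      have hv : R ((-η⁻¹) • u.1) ≤ 1 := by
        rw [hRs, abs_neg, abs_inv, abs_of_pos hη]
        calc η⁻¹ * R u.1 ≤ η⁻¹ * η :=
              mul_le_mul_of_nonneg_left u.2 (inv_nonneg.mpr hη.le)
          _ = 1 := inv_mul_cancel₀ hη.ne'
      have hle : m ⬝ᵥ ((-η⁻¹) • u.1) ≤ S := hS.1 ⟨⟨(-η⁻¹) • u.1, hv⟩, rfl⟩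
      have hdot : m ⬝ᵥ ((-η⁻¹) • u.1) = -η⁻¹ * (m ⬝ᵥ u.1) := by
        rw [dotProduct_smul]; simp [smul_eq_mul]
      rw [hdot] at hle
      have h' := mul_le_mul_of_nonneg_left hle hη.le
      have heq : η * (-η⁻¹ * (m ⬝ᵥ u.1)) = -(m ⬝ᵥ u.1) := by field_simp
      rw [heq] at h'
      show C - m ⬝ᵥ u.1 ≤ C + η * S
      linarith
    · rintro b hb
      have hub : ∀ v : {u : Fin n → ℝ // R u ≤ 1}, m ⬝ᵥ v.1 ≤ (b - C) / η := by
        intro v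
        have hv : R ((-η) • v.1) ≤ η := by
          rw [hRs, abs_neg, abs_of_pos hη]
          calc η * R v.1 ≤ η * 1 := by
                apply mul_le_mul_of_nonneg_left v.2 hη.le
            _ = η := mul_one η
        have := hb ⟨⟨(-η) • v.1, hv⟩, rfl⟩
        simp only [dotProduct_smul, smul_eq_mul] at this
        rw [le_div_iff₀ hη]
        nlinarith
      have : S ≤ (b - C) / η := ciSup_le hub
      rw [le_div_iff₀ hη] at this
      linarith
  exact hlub.ciSup_eq

lemma telescope {n : ℕ} (Ψ : ℕ → (Fin n → ℝ) → ℝ) (g m : ℕ → (Fin n → ℝ))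
    (h0 : m 0 - g 0 = 0) (hs : ∀ k, m (k + 1) - g (k + 1) = m k) (K : ℕ) :
    ∑ k ∈ Finset.range (K + 1), (Ψ k (m k - g k) - Ψ k (m k))
      = Ψ 0 0 - Ψ K (m K)
        + ∑ k ∈ Finset.Icc 1 K, (Ψ k (m k - g k) - Ψ (k - 1) (m k - g k)) := by
  induction K with
  | zero => simp [h0]
  | succ K ih =>
    rw [Finset.sum_range_succ, ih, Finset.sum_Icc_succ_top (by omega), hs K]
    simp only [Nat.add_sub_cancel, hs K]
    ring

theorem ftrl_regret_identity {n K : ℕ} {η : ℝ} (hη : 0 < η)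
    (Ψ : ℕ → (Fin n → ℝ) → ℝ) (Ψ' : ℕ → (Fin n → ℝ) → (Fin n → ℝ))
    (hconv : ∀ k, ConvexOn ℝ Set.univ (Ψ k))
    (hgrad : ∀ k (m : Fin n → ℝ),
      HasGradientAt (fun x : EuclideanSpace ℝ (Fin n) => Ψ k ((WithLp.equiv 2 (Fin n → ℝ)) x))
        ((WithLp.equiv 2 (Fin n → ℝ)).symm (Ψ' k m)) ((WithLp.equiv 2 (Fin n → ℝ)).symm m))
    (R : (Fin n → ℝ) → ℝ)
    (hR0 : ∀ x, R x = 0 ↔ x = 0) (hRs : ∀ (c : ℝ) x, R (c • x) = |c| * R x)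
    (hRt : ∀ x y, R (x + y) ≤ R x + R y)
    (g mseq X : ℕ → (Fin n → ℝ))
    (hm : ∀ k, mseq k = ∑ i ∈ Finset.range (k + 1), g i)
    (hX : ∀ k, X k = -(Ψ' k (mseq k))) :
    (⨆ u : {u : Fin n → ℝ // R u ≤ η}, ∑ k ∈ Finset.range (K + 1), g k ⬝ᵥ (X k - u.1))
    = Ψ 0 0 + η * (⨆ u : {u : Fin n → ℝ // R u ≤ 1}, mseq K ⬝ᵥ u.1) - Ψ K (mseq K)
      + ∑ k ∈ Finset.Icc 1 K, (Ψ k (mseq k - g k) - Ψ (k - 1) (mseq k - g k))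
      - ∑ k ∈ Finset.range (K + 1),
          (Ψ k (mseq k - g k) - Ψ k (mseq k) - Ψ' k (mseq k) ⬝ᵥ (mseq k - g k - mseq k)) := by
  set C : ℝ := ∑ k ∈ Finset.range (K + 1), g k ⬝ᵥ X k with hCdef
  have hbody : ∀ u : {u : Fin n → ℝ // R u ≤ η},
      ∑ k ∈ Finset.range (K + 1), g k ⬝ᵥ (X k - u.1) = C - mseq K ⬝ᵥ u.1 := by
    intro u
    simp only [dotProduct_sub]
    rw [Finset.sum_sub_distrib, hm K]
    congr 1
    simp only [dotProduct, Finset.sum_apply, Finset.sum_mul]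
    exact Finset.sum_comm
  have hre : (⨆ u : {u : Fin n → ℝ // R u ≤ η},
      ∑ k ∈ Finset.range (K + 1), g k ⬝ᵥ (X k - u.1))
      = ⨆ u : {u : Fin n → ℝ // R u ≤ η}, (C - mseq K ⬝ᵥ u.1) := iSup_congr hbody
  obtain ⟨Cb, hCb⟩ := dot_bdd (mseq K) R hR0 hRs hRt
  have hbdd : BddAbove (Set.range fun u : {u : Fin n → ℝ // R u ≤ 1} => mseq K ⬝ᵥ u.1) :=
    ⟨Cb, by rintro x ⟨u, rfl⟩; exact hCb u.1 u.2⟩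
  rw [hre, sup_shift hη C (mseq K) R hR0 hRs hbdd]
  have h0 : mseq 0 - g 0 = 0 := by rw [hm 0]; simp
  have hs : ∀ k, mseq (k + 1) - g (k + 1) = mseq k := by
    intro k
    rw [hm (k + 1), hm k, Finset.sum_range_succ]
    abel
  have htel := telescope Ψ g mseq h0 hs K
  have hC : C = ∑ k ∈ Finset.range (K + 1), (Ψ k (mseq k - g k) - Ψ k (mseq k))
      - ∑ k ∈ Finset.range (K + 1),
          (Ψ k (mseq k - g k) - Ψ k (mseq k) - Ψ' k (mseq k) ⬝ᵥ (mseq k - g k - mseq k)) := by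
    rw [hCdef, ← Finset.sum_sub_distrib]
    apply Finset.sum_congr rfl
    intro k _
    have hmg : mseq k - g k - mseq k = -(g k) := by abel
    rw [hX k, hmg, dotProduct_neg, dotProduct_neg, dotProduct_comm (g k)]
    ring
  rw [hC, htel]
  ring
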